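/- arXiv:1302.2717 — 2 statements merged into one kernel-verified Lean document; each statement's English description precedes it below -/
import Mathlib

section
/- Let f, h ∈ ℝ^n with f non-constant, med(f) = 0, and h non-constant. Let E(u) = ‖u‖_TV / ‖u - med(u)𝟙‖₁, let θ ∈ (0,1], and let v ∈ ∂‖f‖₁. If ‖f‖_TV > ‖h‖_TV + θE(f)‖h - f‖₂² - E(f)⟨v, h - f⟩, then E(f) > E(h) + θE(f)‖h - f‖₂² / ‖h - med(h)𝟙‖₁. -/
noncomputable def med {n : ℕ} (f : Fin (n + 1) → ℝ) : ℝ :=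
  f (Tuple.sort f ⟨n / 2, Nat.lt_succ_of_le (Nat.div_le_self n 2)⟩)

noncomputable def tvF {n : ℕ} (w : Fin n → Fin n → ℝ) (u : Fin n → ℝ) : ℝ :=
  ∑ i, ∑ j, w i j * |u i - u j|

noncomputable def EF {n : ℕ} (w : Fin (n + 1) → Fin (n + 1) → ℝ) (u : Fin (n + 1) → ℝ) : ℝ :=
  tvF w u / ∑ i, |u i - med u|

theorem adaptive_stopping_implies_energy_descent (n : ℕ)
    (w : Fin (n + 1) → Fin (n + 1) → ℝ) (hnn : ∀ i j, 0 ≤ w i j)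
    (θ : ℝ) (hθ : θ ∈ Set.Ioc (0 : ℝ) 1)
    (f h v : Fin (n + 1) → ℝ)
    (hfnc : ∃ i j, f i ≠ f j) (hmf : med f = 0) (hhnc : ∃ i j, h i ≠ h j)
    (hv : ∀ g : Fin (n + 1) → ℝ, (∑ i, |g i|) - (∑ i, |f i|) ≥ ∑ i, v i * (g i - f i))
    (hv0 : ∑ i, v i = 0)
    (hyp : tvF w f > tvF w h + θ * EF w f * (∑ i, (h i - f i) ^ 2)
        - EF w f * ∑ i, v i * (h i - f i)) :
    EF w f > EF w h + θ * EF w f * (∑ i, (h i - f i) ^ 2) / (∑ i, |h i - med h|) := by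

  obtain ⟨hθ0, hθ1⟩ := hθ
  set Q := ∑ i, (h i - f i) ^ 2 with hQ
  set c := ∑ i, v i * (h i - f i) with hc
  set Df := ∑ i, |f i| with hDfdef
  set Dh := ∑ i, |h i - med h| with hDhdef
  have hDfpos : 0 < Df := by
    rcases hfnc with ⟨i, j, hij⟩
    have hne : f i ≠ 0 ∨ f j ≠ 0 := by
      by_contra hcon; push_neg at hcon; exact hij (hcon.1.trans hcon.2.symm)
    have hk : ∃ k ∈ Finset.univ, 0 < |f k| := by
      rcases hne with h' | h'
      · exact ⟨i, Finset.mem_univ i, abs_pos.mpr h'⟩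
      · exact ⟨j, Finset.mem_univ j, abs_pos.mpr h'⟩
    exact Finset.sum_pos' (fun k _ => abs_nonneg _) hk
  have hDhpos : 0 < Dh := by
    rcases hhnc with ⟨i, j, hij⟩
    have hne : h i ≠ med h ∨ h j ≠ med h := by
      by_contra hcon; push_neg at hcon; exact hij (hcon.1.trans hcon.2.symm)
    have hk : ∃ k ∈ Finset.univ, 0 < |h k - med h| := by
      rcases hne with h' | h'
      · exact ⟨i, Finset.mem_univ i, abs_pos.mpr (sub_ne_zero.mpr h')⟩
      · exact ⟨j, Finset.mem_univ j, abs_pos.mpr (sub_ne_zero.mpr h')⟩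
    exact Finset.sum_pos' (fun k _ => abs_nonneg _) hk
  have htvf : 0 ≤ tvF w f :=
    Finset.sum_nonneg fun i _ => Finset.sum_nonneg fun j _ =>
      mul_nonneg (hnn i j) (abs_nonneg _)
  have hEFf : 0 ≤ EF w f := div_nonneg htvf (by
    rw [hmf]; simp only [sub_zero]; exact hDfpos.le)
  have hEFfDf : EF w f * Df = tvF w f := by
    rw [EF, hmf]
    simp only [sub_zero]
    rw [← hDfdef, div_mul_cancel₀ _ hDfpos.ne']
  have hsub : Dh ≥ Df + c := by
    have h1 := hv (fun i => h i - med h)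
    have h2 : ∑ i, v i * (h i - med h - f i) = c - (∑ i, v i) * med h := by
      rw [hc, Finset.sum_mul, ← Finset.sum_sub_distrib]
      congr 1; ext i; ring
    rw [h2, hv0, zero_mul, sub_zero] at h1
    linarith
  have key : EF w f * Dh > tvF w h + θ * EF w f * Q := by
    have h3 : EF w f * (Df + c) ≤ EF w f * Dh :=
      mul_le_mul_of_nonneg_left hsub hEFf
    have h4 : EF w f * (Df + c) = tvF w f + EF w f * c := by
      rw [mul_add, hEFfDf]
    nlinarith
  have hEFh : EF w h + θ * EF w f * Q / Dh = (tvF w h + θ * EF w f * Q) / Dh := by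
    rw [EF, ← hDhdef, add_div]
  rw [hEFh, gt_iff_lt, div_lt_iff₀ hDhpos]
  linarith
end

section
/- Let f^∞ ∈ ℝ^n with ‖f^∞‖₂ = 1 and med(f^∞) = 0, let v^∞ ∈ ∂‖f^∞‖₁ with ⟨v^∞,𝟙⟩ = 0, and suppose h^∞ ∈ ℝ^n satisfies ‖f^∞‖_TV ≥ ‖h^∞‖_TV + θE(f^∞)‖h^∞ - f^∞‖₂² - E(f^∞)⟨v^∞, h^∞ - f^∞⟩ for some θ ∈ (0,1]. If f^∞ is a local minimum of E on {u : u non-constant} and h_η := ηh^∞ + (1-η)f^∞ is non-constant for all η ∈ (0,1], then h^∞ = f^∞. -/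
lemma tv_convex_aux {n : ℕ} (w : Fin n → Fin n → ℝ) (hnn : ∀ i j, 0 ≤ w i j)
    (h f : Fin n → ℝ) (η : ℝ) (hη0 : 0 ≤ η) (hη1 : η ≤ 1) :
    tvF w (fun i => η * h i + (1 - η) * f i) ≤ η * tvF w h + (1 - η) * tvF w f := by
  unfold tvF
  rw [Finset.mul_sum, Finset.mul_sum, ← Finset.sum_add_distrib]
  refine Finset.sum_le_sum fun i _ => ?_
  rw [Finset.mul_sum, Finset.mul_sum, ← Finset.sum_add_distrib]
  refine Finset.sum_le_sum fun j _ => ?_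
  have h1 : (η * h i + (1 - η) * f i) - (η * h j + (1 - η) * f j)
      = η * (h i - h j) + (1 - η) * (f i - f j) := by ring
  rw [h1]
  have h2 : |η * (h i - h j) + (1 - η) * (f i - f j)|
      ≤ η * |h i - h j| + (1 - η) * |f i - f j| := by
    calc |η * (h i - h j) + (1 - η) * (f i - f j)|
        ≤ |η * (h i - h j)| + |(1 - η) * (f i - f j)| := abs_add_le _ _
      _ = η * |h i - h j| + (1 - η) * |f i - f j| := by
          rw [abs_mul, abs_mul, abs_of_nonneg hη0, abs_of_nonneg (show (0:ℝ) ≤ 1 - η by linarith)]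
  calc w i j * |η * (h i - h j) + (1 - η) * (f i - f j)|
      ≤ w i j * (η * |h i - h j| + (1 - η) * |f i - f j|) :=
        mul_le_mul_of_nonneg_left h2 (hnn i j)
    _ = η * (w i j * |h i - h j|) + (1 - η) * (w i j * |f i - f j|) := by ring

set_option maxHeartbeats 2000000 in
theorem clm_property_at_local_minimum (n : ℕ)
    (w : Fin (n + 1) → Fin (n + 1) → ℝ) (hnn : ∀ i j, 0 ≤ w i j)
    (θ : ℝ) (hθ : θ ∈ Set.Ioc (0 : ℝ) 1)
    (finf vinf hinf : Fin (n + 1) → ℝ)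
    (hf2 : Real.sqrt (∑ i, (finf i) ^ 2) = 1) (hmf : med finf = 0)
    (hv : ∀ g : Fin (n + 1) → ℝ,
      (∑ i, |g i|) - (∑ i, |finf i|) ≥ ∑ i, vinf i * (g i - finf i))
    (hv0 : ∑ i, vinf i = 0)
    (hEf : 0 < EF w finf)
    (hineq : tvF w finf ≥ tvF w hinf + θ * EF w finf * (∑ i, (hinf i - finf i) ^ 2)
        - EF w finf * ∑ i, vinf i * (hinf i - finf i))
    (hlocal : ∃ ε > (0 : ℝ), ∀ u : Fin (n + 1) → ℝ, (∃ a b, u a ≠ u b) →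
        Real.sqrt (∑ i, (u i - finf i) ^ 2) ≤ ε → EF w finf ≤ EF w u)
    (hη : ∀ η : ℝ, 0 < η → η ≤ 1 →
        ∃ a b, η * hinf a + (1 - η) * finf a ≠ η * hinf b + (1 - η) * finf b) :
    hinf = finf := by
  by_contra hne
  obtain ⟨hθ0, hθ1⟩ := hθ
  set D := ∑ i, (hinf i - finf i) ^ 2 with hDdef
  set s := ∑ i, vinf i * (hinf i - finf i) with hsdef
  set E := EF w finf with hEdef
  set T := tvF w finf with hTdef
  set F := ∑ i, |finf i| with hFdef
  -- D > 0
  have hD : 0 < D := by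
    have hex : ∃ i, hinf i ≠ finf i := by
      by_contra hc; push_neg at hc; exact hne (funext hc)
    obtain ⟨i, hi⟩ := hex
    have hi' : hinf i - finf i ≠ 0 := sub_ne_zero.mpr hi
    exact Finset.sum_pos' (fun j _ => sq_nonneg _)
      ⟨i, Finset.mem_univ i, by positivity⟩
  -- E = T / F and F > 0
  have hEform : E = T / F := by
    rw [hEdef]; unfold EF
    rw [hmf]
    simp [hTdef, hFdef]
  have hF : 0 < F := by
    have hF0 : 0 ≤ F := Finset.sum_nonneg fun i _ => abs_nonneg _
    rcases hF0.lt_or_eq with h | h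
    · exact h
    · exfalso; rw [hEform, ← h, div_zero] at hEf; exact lt_irrefl 0 hEf
  have hTE : T = E * F := by rw [hEform]; field_simp
  obtain ⟨ε, hε, hloc⟩ := hlocal
  set η := min 1 (min (ε / (Real.sqrt D + 1)) (F / (2 * (|s| + 1)))) with hηdef
  have hsq : 0 ≤ Real.sqrt D := Real.sqrt_nonneg _
  have hη0 : 0 < η := by
    apply lt_min one_pos
    apply lt_min
    · positivity
    · positivity
  have hη1 : η ≤ 1 := min_le_left _ _
  have hη2 : η ≤ ε / (Real.sqrt D + 1) := le_trans (min_le_right _ _) (min_le_left _ _)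
  have hη3 : η ≤ F / (2 * (|s| + 1)) := le_trans (min_le_right _ _) (min_le_right _ _)
  set u : Fin (n + 1) → ℝ := fun i => η * hinf i + (1 - η) * finf i with hudef
  -- closeness
  have hsum : ∑ i, (u i - finf i) ^ 2 = η ^ 2 * D := by
    rw [hDdef, Finset.mul_sum]
    refine Finset.sum_congr rfl fun i _ => ?_
    simp only [hudef]; ring
  have hclose : Real.sqrt (∑ i, (u i - finf i) ^ 2) ≤ ε := by
    rw [hsum, Real.sqrt_mul (sq_nonneg η), Real.sqrt_sq hη0.le]
    have hpos : (0:ℝ) < Real.sqrt D + 1 := by positivity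
    have h1 : η * (Real.sqrt D + 1) ≤ ε := (le_div_iff₀ hpos).mp hη2
    have h2 : η * Real.sqrt D ≤ η * (Real.sqrt D + 1) :=
      mul_le_mul_of_nonneg_left (by linarith) hη0.le
    linarith only [h1, h2]
  -- denominator lower bound
  set m := med u with hmdef
  set denu := ∑ i, |u i - m| with hdenudef
  have hkey := hv (fun i => u i - m)
  have hrhs : ∑ i, vinf i * ((u i - m) - finf i) = η * s - m * ∑ i, vinf i := by
    rw [hsdef, Finset.mul_sum, Finset.mul_sum, ← Finset.sum_sub_distrib]
    refine Finset.sum_congr rfl fun i _ => ?_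
    simp only [hudef]; ring
  rw [hrhs, hv0, mul_zero, sub_zero] at hkey
  have hden : F + η * s ≤ denu := by
    simp only [hdenudef]
    linarith [hkey]
  -- denominator positivity
  have habs1 : η * |s| ≤ F / 2 := by
    have h1 : η * |s| ≤ F / (2 * (|s| + 1)) * |s| :=
      mul_le_mul_of_nonneg_right hη3 (abs_nonneg s)
    have h2 : F / (2 * (|s| + 1)) * |s| ≤ F / 2 := by
      rw [div_mul_eq_mul_div, div_le_div_iff₀ (by positivity) (by norm_num)]
      nlinarith [abs_nonneg s, hF]
    linarith
  have hnegabs : η * (-|s|) ≤ η * s := mul_le_mul_of_nonneg_left (neg_abs_le s) hη0.le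
  have hdenpos : 0 < F + η * s := by nlinarith
  have hdenu_pos : 0 < denu := lt_of_lt_of_le hdenpos hden
  -- numerator bound
  have hconv := tv_convex_aux w hnn hinf finf η hη0.le hη1
  have hnum : tvF w u ≤ E * (F + η * s) - η * θ * E * D := by
    have h1 : tvF w hinf ≤ T - θ * E * D + E * s := by linarith [hineq]
    have h2 : tvF w u ≤ η * tvF w hinf + (1 - η) * T := hconv
    nlinarith [hη0.le, hconv]
  have hlt : tvF w u < E * denu := by
    have h3 : E * (F + η * s) ≤ E * denu := mul_le_mul_of_nonneg_left hden hEf.le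
    have h4 : 0 < η * θ * E * D := by positivity
    linarith
  have hEu : EF w u < E := by
    show tvF w u / ∑ i, |u i - med u| < E
    rw [div_lt_iff₀ hdenu_pos]
    linarith [hlt]
  have hge : E ≤ EF w u := hloc u (hη η hη0 hη1) hclose
  linarith
end
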